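/- Under the composed linear order ≺ on E(G₂ ∘ G₁), every processive vertex v of G = G₂ ∘ G₁ satisfies O(v)⁻ = I(v)⁺ + 1, i.e., the minimal outgoing edge of v is the immediate successor of the maximal incoming edge of v. -/
import Mathlib


/-- A progressive graph: a directed (multi)graph with sources `s`, targets `t`, and
a distinguished boundary set `σ` of vertices. -/
structure PGraph where
  V : Type
  E : Type
  s : E → V
  t : E → V
  σ : Set V

namespace PGraph

variable (G : PGraph)

/-- One edge can be followed by another. -/
def step (e f : G.E) : Prop := G.t e = G.s f

/-- The reachable order: a directed path starts with `e₁` and ends with `e₂`. -/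
def reach : G.E → G.E → Prop := Relation.ReflTransGen G.step

/-- No directed cycles. -/
def Acyclic : Prop := ∀ e, ¬ Relation.TransGen G.step e e

/-- Incoming edges of a vertex. -/
def I (v : G.V) : Set G.E := {e | G.t e = v}

/-- Outgoing edges of a vertex. -/
def O (v : G.V) : Set G.E := {e | G.s e = v}

/-- An input edge: it starts at a boundary vertex. -/
def InputEdge (e : G.E) : Prop := G.s e ∈ G.σ

/-- An output edge: it ends at a boundary vertex. -/
def OutputEdge (e : G.E) : Prop := G.t e ∈ G.σ

/-- An inner vertex. -/
def Inner (v : G.V) : Prop := v ∉ G.σ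

/-- An input vertex: a boundary vertex which is a source. -/
def InputVertex (v : G.V) : Prop := v ∈ G.σ ∧ ∃ e, G.s e = v

/-- An output vertex: a boundary vertex which is a sink. -/
def OutputVertex (v : G.V) : Prop := v ∈ G.σ ∧ ∃ e, G.t e = v

/-- The boundary consists of leaves: every boundary vertex has exactly one
incident edge-end. -/
def Progressive : Prop := ∀ v ∈ G.σ, ∃! e : G.E, G.s e = v ∨ G.t e = v

/-- The reflexive closure of a strict order on edges. -/
def le (lt : G.E → G.E → Prop) (a b : G.E) : Prop := lt a b ∨ a = b

/-- The convex hull of a set of edges with respect to a linear order `lt`. -/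
def conv (lt : G.E → G.E → Prop) (X : Set G.E) : Set G.E :=
  {y | ∃ a ∈ X, ∃ b ∈ X, G.le lt a y ∧ G.le lt y b}

/-- (Q₁): the reachable order implies the linear order. -/
def Q1 (lt : G.E → G.E → Prop) : Prop :=
  ∀ e₁ e₂, G.reach e₁ e₂ → G.le lt e₁ e₂

/-- (Q₂), the nesting condition. -/
def Q2 (lt : G.E → G.E → Prop) : Prop :=
  ∀ e₁ e e₂ : G.E, lt e₁ e → lt e e₂ →
    (G.t e₁ = G.t e₂ → G.I (G.t e) ⊆ G.conv lt (G.I (G.t e₁))) ∧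
    (G.s e₁ = G.s e₂ → G.O (G.s e) ⊆ G.conv lt (G.O (G.s e₁))) ∧
    (G.t e₁ = G.s e₂ →
      G.I (G.t e) ⊆ G.conv lt (G.I (G.t e₁)) ∨ G.O (G.s e) ⊆ G.conv lt (G.O (G.s e₂)))

/-- An upward planar order: a linear (strict total) order on edges satisfying
(Q₁) and the nesting condition (Q₂). -/
def UPO (lt : G.E → G.E → Prop) : Prop :=
  IsStrictTotalOrder G.E lt ∧ G.Q1 lt ∧ G.Q2 lt

/-- Admissibility: for every inner vertex `v`, input edges avoid `conv (O v)` and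
output edges avoid `conv (I v)`. -/
def Admissible (lt : G.E → G.E → Prop) : Prop :=
  ∀ v : G.V, G.Inner v →
    (∀ e, G.InputEdge e → e ∉ G.conv lt (G.O v)) ∧
    (∀ e, G.OutputEdge e → e ∉ G.conv lt (G.I v))

end PGraph

/-- Data exhibiting `G` as the composite `G₂ ∘ G₁` of two progressive graphs:
the edges of `G₁` and `G₂` embed into those of `G` via `j₁`, `j₂`, overlapping
exactly on the output edges of `G₁`, identified with the input edges of `G₂`;
the removed boundary vertices are the output vertices of `G₁` and the input
vertices of `G₂`, and the boundary of `G` is the union of the input vertices of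
`G₁` and the output vertices of `G₂`. -/
structure CompData (G₁ G₂ G : PGraph) where
  j₁ : G₁.E → G.E
  j₂ : G₂.E → G.E
  k₁ : G₁.V → G.V
  k₂ : G₂.V → G.V
  inj₁ : Function.Injective j₁
  inj₂ : Function.Injective j₂
  coverE : ∀ e : G.E, (∃ a, j₁ a = e) ∨ (∃ b, j₂ b = e)
  glue : ∀ a b, j₁ a = j₂ b → G₁.OutputEdge a ∧ G₂.InputEdge b
  glueOut : ∀ a, G₁.OutputEdge a → ∃ b, G₂.InputEdge b ∧ j₁ a = j₂ b
  glueIn : ∀ b, G₂.InputEdge b → ∃ a, G₁.OutputEdge a ∧ j₁ a = j₂ b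
  src₁ : ∀ a, G.s (j₁ a) = k₁ (G₁.s a)
  tgt₁ : ∀ a, ¬ G₁.OutputEdge a → G.t (j₁ a) = k₁ (G₁.t a)
  tgt₂ : ∀ b, G.t (j₂ b) = k₂ (G₂.t b)
  src₂ : ∀ b, ¬ G₂.InputEdge b → G.s (j₂ b) = k₂ (G₂.s b)
  injV₁ : ∀ v w, ¬ G₁.OutputVertex v → ¬ G₁.OutputVertex w → k₁ v = k₁ w → v = w
  injV₂ : ∀ v w, ¬ G₂.InputVertex v → ¬ G₂.InputVertex w → k₂ v = k₂ w → v = w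
  disjV : ∀ v w, ¬ G₁.OutputVertex v → ¬ G₂.InputVertex w → k₁ v ≠ k₂ w
  coverV : ∀ u : G.V,
    (∃ v, ¬ G₁.OutputVertex v ∧ k₁ v = u) ∨ (∃ w, ¬ G₂.InputVertex w ∧ k₂ w = u)
  bdry : ∀ u : G.V,
    u ∈ G.σ ↔ (∃ v, G₁.InputVertex v ∧ k₁ v = u) ∨ (∃ w, G₂.OutputVertex w ∧ k₂ w = u)

/-- `lt` is the shuffle-style composed linear order `lt₂ ∘ lt₁` on the edges of the
composite: it restricts to `lt₁` on `E(G₁)` and to `lt₂` on `E(G₂)`, and an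
unidentified edge of `G₁` precedes an unidentified edge of `G₂` iff some identified
edge `ē = j₁ o = j₂ i` lies weakly between them. -/
def IsCompOrder {G₁ G₂ G : PGraph} (C : CompData G₁ G₂ G)
    (lt₁ : G₁.E → G₁.E → Prop) (lt₂ : G₂.E → G₂.E → Prop)
    (lt : G.E → G.E → Prop) : Prop :=
  (∀ a a', lt₁ a a' ↔ lt (C.j₁ a) (C.j₁ a')) ∧
  (∀ b b', lt₂ b b' ↔ lt (C.j₂ b) (C.j₂ b')) ∧
  (∀ a b, (∀ b', C.j₁ a ≠ C.j₂ b') → (∀ a', C.j₂ b ≠ C.j₁ a') →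
    (lt (C.j₁ a) (C.j₂ b) ↔
      ∃ o i, C.j₁ o = C.j₂ i ∧ G₁.le lt₁ a o ∧ G₂.le lt₂ i b))

/-- A boundary vertex cannot have both an incoming and an outgoing edge. -/
lemma PGraph.bdry_clash (G : PGraph) (hP : G.Progressive) (hA : G.Acyclic)
    {u : G.V} (hu : u ∈ G.σ) {e f : G.E} (he : G.t e = u) (hf : G.s f = u) : False := by
  obtain ⟨g, -, hg⟩ := hP u hu
  have h1 : e = g := hg e (Or.inr he)
  have h2 : f = g := hg f (Or.inl hf)
  cases h1.trans h2.symm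
  exact hA e (Relation.TransGen.single (show G.step e e from he.trans hf.symm))

/-- In a single UPO graph, no edge lies strictly between all incoming and all
outgoing edges of a processive vertex. -/
lemma PGraph.no_strict_between (G : PGraph) (lt : G.E → G.E → Prop)
    (hU : G.UPO lt) (v : G.V) (a : G.E) (ha : G.t a = v) (o : G.E) (ho : G.s o = v)
    (c : G.E) (hlo : ∀ i, G.t i = v → lt i c) (hhi : ∀ o', G.s o' = v → lt c o') :
    False := by
  haveI := hU.1
  have hac : lt a c := hlo a ha
  have hco : lt c o := hhi o ho
  rcases (hU.2.2 a c o hac hco).2.2 (ha.trans ho.symm) with h | h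
  · obtain ⟨x, hx, y, hy, -, hcy⟩ := h (show c ∈ G.I (G.t c) from rfl)
    have hyv : G.t y = v := by rw [← ha]; exact hy
    have hyc : lt y c := hlo y hyv
    rcases hcy with h' | h''
    · exact irrefl_of lt c (trans_of lt h' hyc)
    · cases h''; exact irrefl_of lt _ hyc
  · obtain ⟨x, hx, y, hy, hxc, -⟩ := h (show c ∈ G.O (G.s c) from rfl)
    have hxv : G.s x = v := by rw [← ho]; exact hx
    have hcx : lt c x := hhi x hxv
    rcases hxc with h' | h''
    · exact irrefl_of lt c (trans_of lt hcx h')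
    · cases h''; exact irrefl_of lt _ hcx

/-- Under the composed linear order, every processive vertex `v` of the composite
satisfies `O(v)⁻ = I(v)⁺ + 1`: there is no edge strictly between all incoming
edges and all outgoing edges of `v`. -/
theorem comp_processive_succ (G₁ G₂ G : PGraph)
    [Fintype G₁.E] [Fintype G₂.E] [Fintype G.E]
    (lt₁ : G₁.E → G₁.E → Prop) (lt₂ : G₂.E → G₂.E → Prop) (lt : G.E → G.E → Prop)
    (hP₁ : G₁.Progressive) (hA₁ : G₁.Acyclic) (hU₁ : G₁.UPO lt₁) (hAd₁ : G₁.Admissible lt₁)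
    (hP₂ : G₂.Progressive) (hA₂ : G₂.Acyclic) (hU₂ : G₂.UPO lt₂) (hAd₂ : G₂.Admissible lt₂)
    (C : CompData G₁ G₂ G) (hst : IsStrictTotalOrder G.E lt)
    (hC : IsCompOrder C lt₁ lt₂ lt) :
    ∀ v : G.V, (G.I v).Nonempty → (G.O v).Nonempty →
      ¬ ∃ e : G.E, (∀ i ∈ G.I v, lt i e) ∧ (∀ o ∈ G.O v, lt e o) := by
  intro v hIv hOv
  rintro ⟨e, hIe, hOe⟩
  haveI := hst
  haveI := hU₁.1
  haveI := hU₂.1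
  obtain ⟨hr₁, hr₂, hmix⟩ := hC
  rcases C.coverV v with ⟨v₁, hv₁out, rfl⟩ | ⟨v₂, hv₂in, rfl⟩
  · -- Case 1 : v = k₁ v₁ with v₁ not an output vertex of G₁
    -- every incoming edge of v comes from a non-output edge of G₁ into v₁
    have hIin : ∀ f, G.t f = C.k₁ v₁ →
        ∃ a, ¬ G₁.OutputEdge a ∧ C.j₁ a = f ∧ G₁.t a = v₁ := by
      intro f hf
      have key : ∀ b, C.j₂ b ≠ f := by
        intro b hb
        have ht : C.k₂ (G₂.t b) = C.k₁ v₁ := by rw [← C.tgt₂, hb, hf]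
        by_cases hin : G₂.InputVertex (G₂.t b)
        · obtain ⟨hσ, f', hf'⟩ := hin
          exact G₂.bdry_clash hP₂ hA₂ hσ rfl hf'
        · exact C.disjV v₁ (G₂.t b) hv₁out hin ht.symm
      rcases C.coverE f with ⟨a, ha⟩ | ⟨b, hb⟩
      · by_cases hout : G₁.OutputEdge a
        · obtain ⟨b, -, hab⟩ := C.glueOut a hout
          exact absurd (hab ▸ ha) (key b)
        · refine ⟨a, hout, ha, ?_⟩
          have hk : C.k₁ (G₁.t a) = C.k₁ v₁ := by rw [← C.tgt₁ a hout, ha, hf]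
          have hnout : ¬ G₁.OutputVertex (G₁.t a) := by
            rintro ⟨hσ, -⟩
            exact hout hσ
          exact C.injV₁ _ _ hnout hv₁out hk
      · exact absurd hb (key b)
    -- every outgoing edge of v comes from an edge of G₁ out of v₁
    have hOin : ∀ f, G.s f = C.k₁ v₁ → ∃ a, C.j₁ a = f ∧ G₁.s a = v₁ := by
      intro f hf
      have main : ∀ a, C.j₁ a = f → ∃ a', C.j₁ a' = f ∧ G₁.s a' = v₁ := by
        intro a ha
        refine ⟨a, ha, ?_⟩
        have hk : C.k₁ (G₁.s a) = C.k₁ v₁ := by rw [← C.src₁, ha, hf]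
        have hnout : ¬ G₁.OutputVertex (G₁.s a) := by
          rintro ⟨hσ, f', hf'⟩
          exact G₁.bdry_clash hP₁ hA₁ hσ hf' rfl
        exact C.injV₁ _ _ hnout hv₁out hk
      rcases C.coverE f with ⟨a, ha⟩ | ⟨b, hb⟩
      · exact main a ha
      · by_cases hin : G₂.InputEdge b
        · obtain ⟨a, -, hab⟩ := C.glueIn b hin
          exact main a (hab.trans hb)
        · exfalso
          have hs : C.k₂ (G₂.s b) = C.k₁ v₁ := by rw [← C.src₂ b hin, hb, hf]
          by_cases hin' : G₂.InputVertex (G₂.s b)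
          · exact hin hin'.1
          · exact C.disjV v₁ _ hv₁out hin' hs.symm
    obtain ⟨e₀, he₀⟩ := hIv
    obtain ⟨aS, haSout, haSj, haSt⟩ := hIin e₀ he₀
    obtain ⟨e₁, he₁⟩ := hOv
    obtain ⟨oS, hoSj, hoSs⟩ := hOin e₁ he₁
    have hv₁σ : G₁.Inner v₁ := fun hσ => hv₁out ⟨hσ, aS, haSt⟩
    have hIlt : ∀ i, G₁.t i = v₁ → lt (C.j₁ i) e := by
      intro i hi
      have hnout : ¬ G₁.OutputEdge i := fun h => hv₁σ (hi ▸ h)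
      exact hIe _ (show G.t (C.j₁ i) = C.k₁ v₁ by rw [C.tgt₁ i hnout, hi])
    have hOlt : ∀ o, G₁.s o = v₁ → lt e (C.j₁ o) := by
      intro o ho
      exact hOe _ (show G.s (C.j₁ o) = C.k₁ v₁ by rw [C.src₁, ho])
    by_cases hex : ∃ c, C.j₁ c = e
    · obtain ⟨c, rfl⟩ := hex
      exact G₁.no_strict_between lt₁ hU₁ v₁ aS haSt oS hoSs c
        (fun i hi => (hr₁ i c).mpr (hIlt i hi))
        (fun o ho => (hr₁ c o).mpr (hOlt o ho))
    · push_neg at hex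
      obtain ⟨b, rfl⟩ := (C.coverE e).resolve_left (by rintro ⟨a, ha⟩; exact hex a ha)
      have haSun : ∀ b', C.j₁ aS ≠ C.j₂ b' := fun b' h => haSout (C.glue aS b' h).1
      obtain ⟨o, i, hoi, hao, hib⟩ :=
        (hmix aS b haSun (fun a' h => (hex a' h.symm))).mp (hIlt aS haSt)
      have hoout : G₁.OutputEdge o := (C.glue o i hoi).1
      have hao' : lt₁ aS o := by
        rcases hao with h | rfl
        · exact h
        · exact absurd hoout haSout
      have hib' : lt₂ i b := by
        rcases hib with h | rfl
        · exact h
        · exact absurd hoi (hex o)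
      have hoe : lt (C.j₁ o) (C.j₂ b) := by rw [hoi]; exact (hr₂ i b).mp hib'
      have hoo' : lt₁ o oS := (hr₁ o oS).mpr (trans_of lt hoe (hOlt oS hoSs))
      have hts : G₁.t aS = G₁.s oS := haSt.trans hoSs.symm
      rcases (hU₁.2.2 aS o oS hao' hoo').2.2 hts with h | h
      · have hmem : o ∈ G₁.conv lt₁ (G₁.I (G₁.t aS)) :=
          h (show o ∈ G₁.I (G₁.t o) from rfl)
        rw [haSt] at hmem
        exact (hAd₁ v₁ hv₁σ).2 o hoout hmem
      · have hmem : o ∈ G₁.conv lt₁ (G₁.O (G₁.s oS)) :=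
          h (show o ∈ G₁.O (G₁.s o) from rfl)
        rw [hoSs] at hmem
        obtain ⟨x, hx, y, hy, hxo, -⟩ := hmem
        have h1 : lt (C.j₂ b) (C.j₁ x) := hOlt x hx
        have h2 : lt (C.j₁ x) (C.j₂ b) := by
          rcases hxo with h' | rfl
          · exact trans_of lt ((hr₁ x o).mp h') hoe
          · exact hoe
        exact irrefl_of lt _ (trans_of lt h1 h2)
  · -- Case 2 : v = k₂ v₂ with v₂ not an input vertex of G₂
    have hOin : ∀ f, G.s f = C.k₂ v₂ →
        ∃ b, ¬ G₂.InputEdge b ∧ C.j₂ b = f ∧ G₂.s b = v₂ := by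
      intro f hf
      have key : ∀ a, C.j₁ a ≠ f := by
        intro a ha
        have hs : C.k₁ (G₁.s a) = C.k₂ v₂ := by rw [← C.src₁, ha, hf]
        by_cases hout : G₁.OutputVertex (G₁.s a)
        · obtain ⟨hσ, f', hf'⟩ := hout
          exact G₁.bdry_clash hP₁ hA₁ hσ hf' rfl
        · exact C.disjV (G₁.s a) v₂ hout hv₂in hs
      rcases C.coverE f with ⟨a, ha⟩ | ⟨b, hb⟩
      · exact absurd ha (key a)
      · by_cases hin : G₂.InputEdge b
        · obtain ⟨a, -, hab⟩ := C.glueIn b hin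
          exact absurd (hab.symm ▸ hb) (key a)
        · refine ⟨b, hin, hb, ?_⟩
          have hk : C.k₂ (G₂.s b) = C.k₂ v₂ := by rw [← C.src₂ b hin, hb, hf]
          have hnin : ¬ G₂.InputVertex (G₂.s b) := by
            rintro ⟨hσ, -⟩
            exact hin hσ
          exact C.injV₂ _ _ hnin hv₂in hk
    have hIin : ∀ f, G.t f = C.k₂ v₂ → ∃ b, C.j₂ b = f ∧ G₂.t b = v₂ := by
      intro f hf
      have main : ∀ b, C.j₂ b = f → ∃ b', C.j₂ b' = f ∧ G₂.t b' = v₂ := by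
        intro b hb
        refine ⟨b, hb, ?_⟩
        have hk : C.k₂ (G₂.t b) = C.k₂ v₂ := by rw [← C.tgt₂, hb, hf]
        have hnin : ¬ G₂.InputVertex (G₂.t b) := by
          rintro ⟨hσ, f', hf'⟩
          exact G₂.bdry_clash hP₂ hA₂ hσ rfl hf'
        exact C.injV₂ _ _ hnin hv₂in hk
      rcases C.coverE f with ⟨a, ha⟩ | ⟨b, hb⟩
      · by_cases hout : G₁.OutputEdge a
        · obtain ⟨b, -, hab⟩ := C.glueOut a hout
          exact main b (hab ▸ ha)
        · exfalso
          have ht : C.k₁ (G₁.t a) = C.k₂ v₂ := by rw [← C.tgt₁ a hout, ha, hf]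
          have hnout : ¬ G₁.OutputVertex (G₁.t a) := by
            rintro ⟨hσ, -⟩
            exact hout hσ
          exact C.disjV (G₁.t a) v₂ hnout hv₂in ht
      · exact main b hb
    obtain ⟨e₁, he₁⟩ := hOv
    obtain ⟨oS, hoSnin, hoSj, hoSs⟩ := hOin e₁ he₁
    obtain ⟨e₀, he₀⟩ := hIv
    obtain ⟨iS, hiSj, hiSt⟩ := hIin e₀ he₀
    have hv₂σ : G₂.Inner v₂ := fun hσ => hv₂in ⟨hσ, oS, hoSs⟩
    have hOlt : ∀ o, G₂.s o = v₂ → lt e (C.j₂ o) := by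
      intro o ho
      have hnin : ¬ G₂.InputEdge o := fun h => hv₂σ (ho ▸ h)
      exact hOe _ (show G.s (C.j₂ o) = C.k₂ v₂ by rw [C.src₂ o hnin, ho])
    have hIlt : ∀ i, G₂.t i = v₂ → lt (C.j₂ i) e := by
      intro i hi
      exact hIe _ (show G.t (C.j₂ i) = C.k₂ v₂ by rw [C.tgt₂, hi])
    by_cases hex : ∃ c, C.j₂ c = e
    · obtain ⟨c, rfl⟩ := hex
      exact G₂.no_strict_between lt₂ hU₂ v₂ iS hiSt oS hoSs c
        (fun i hi => (hr₂ i c).mpr (hIlt i hi))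
        (fun o ho => (hr₂ c o).mpr (hOlt o ho))
    · push_neg at hex
      obtain ⟨a, rfl⟩ := (C.coverE e).resolve_right (by rintro ⟨b, hb⟩; exact hex b hb)
      have hoSun : ∀ a', C.j₂ oS ≠ C.j₁ a' :=
        fun a' h => hoSnin (C.glue a' oS h.symm).2
      obtain ⟨o, i, hoi, hao, hio⟩ :=
        (hmix a oS (fun b' h => hex b' h.symm) hoSun).mp (hOlt oS hoSs)
      have hiin : G₂.InputEdge i := (C.glue o i hoi).2
      have hao' : lt₁ a o := by
        rcases hao with h | rfl
        · exact h
        · exact absurd hoi.symm (hex i)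
      have hio' : lt₂ i oS := by
        rcases hio with h | rfl
        · exact h
        · exact absurd hiin hoSnin
      have hei : lt (C.j₁ a) (C.j₂ i) := by rw [← hoi]; exact (hr₁ a o).mp hao'
      have hii' : lt₂ iS i := (hr₂ iS i).mpr (trans_of lt (hIlt iS hiSt) hei)
      have hts : G₂.t iS = G₂.s oS := hiSt.trans hoSs.symm
      rcases (hU₂.2.2 iS i oS hii' hio').2.2 hts with h | h
      · have hmem : i ∈ G₂.conv lt₂ (G₂.I (G₂.t iS)) :=
          h (show i ∈ G₂.I (G₂.t i) from rfl)
        rw [hiSt] at hmem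
        obtain ⟨x, hx, y, hy, -, hiy⟩ := hmem
        have h1 : lt (C.j₂ y) (C.j₁ a) := hIlt y hy
        have h2 : lt (C.j₁ a) (C.j₂ y) := by
          rcases hiy with h' | rfl
          · exact trans_of lt hei ((hr₂ i y).mp h')
          · exact hei
        exact irrefl_of lt _ (trans_of lt h1 h2)
      · have hmem : i ∈ G₂.conv lt₂ (G₂.O (G₂.s oS)) :=
          h (show i ∈ G₂.O (G₂.s i) from rfl)
        rw [hoSs] at hmem
        exact (hAd₂ v₂ hv₂σ).1 i hiin hmem
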